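/- If (B_t)_{t∈[0,1]} is a continuous path of barcodes such that there exists a continuous positive function f : [0,1] → ℝ_{>0} with Spec(B_t) = f(t)·Spec(B_0) for all t (no bifurcations in the spectrum), then B_t is the dilation of B_0 by the factor f(t), i.e. every bar (a,b] of B_0 corresponds to the bar (f(t)a, f(t)b] of B_t with the same multiplicity. -/

import Mathlib

open scoped Classical
noncomputable section

/-- A bar: a pair `(a, b)` representing the interval `(a, b]` (with `b = ⊤` for `(a, ∞)`). -/
abbrev Bar : Type := ℝ × EReal

namespace Bar

/-- The interval `(a,b]` is nonempty. -/
def IsValid (I : Bar) : Prop := (I.1 : EReal) < I.2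

/-- The length of a bar. -/
def len (I : Bar) : EReal := I.2 - (I.1 : EReal)

/-- A bar is semi-infinite if its right endpoint is `+∞`. -/
def IsInf (I : Bar) : Prop := I.2 = ⊤

end Bar

/-- `I ⊆ J^{-δ}`, where `(a,b]^{-δ} = (a-δ, b+δ]`. -/
def barSub (I J : Bar) (δ : ℝ) : Prop :=
  J.1 - δ ≤ I.1 ∧ I.2 ≤ J.2 + (δ : EReal)

/-- A barcode: a multiset of nonempty intervals of the form `(a,b]` or `(a,∞)`,
recorded by its multiplicity function. -/
structure Barcode where
  mult : Bar → ℕ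
  valid : ∀ I, mult I ≠ 0 → I.IsValid

namespace Barcode

/-- `m` is a `δ`-matching between the barcodes `B` and `B'`: it matches `m I J` copies of the
bar `I` of `B` with copies of the bar `J` of `B'`; matched bars must be `δ`-close, and
unmatched (deleted) bars must have length at most `2δ`. -/
def IsMatching (B B' : Barcode) (δ : ℝ) (m : Bar → Bar → ℕ) : Prop :=
  (∀ I, {J | m I J ≠ 0}.Finite) ∧
  (∀ J, {I | m I J ≠ 0}.Finite) ∧
  (∀ I, ∑ᶠ J, m I J ≤ B.mult I) ∧
  (∀ J, ∑ᶠ I, m I J ≤ B'.mult J) ∧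
  (∀ I, ∑ᶠ J, m I J < B.mult I → I.len ≤ ((2 * δ : ℝ) : EReal)) ∧
  (∀ J, ∑ᶠ I, m I J < B'.mult J → J.len ≤ ((2 * δ : ℝ) : EReal)) ∧
  (∀ I J, m I J ≠ 0 → barSub I J δ ∧ barSub J I δ)

/-- `B` and `B'` admit a `δ`-matching. -/
def HasMatching (B B' : Barcode) (δ : ℝ) : Prop := ∃ m, IsMatching B B' δ m

/-- The bottleneck distance between two barcodes. -/
def bottleneck (B B' : Barcode) : EReal :=
  sInf {x : EReal | ∃ δ : ℝ, 0 ≤ δ ∧ x = (δ : EReal) ∧ HasMatching B B' δ}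

/-- A barcode is finite if it has finitely many bars counted with multiplicity. -/
def IsFinite (B : Barcode) : Prop := {I | B.mult I ≠ 0}.Finite

/-- A barcode is q-tame if for every `ε > 0` it has finitely many bars of length `≥ ε`. -/
def QTame (B : Barcode) : Prop :=
  ∀ ε : ℝ, 0 < ε → {I | B.mult I ≠ 0 ∧ (ε : EReal) ≤ I.len}.Finite

end Barcode

/-- Rescale a bar by a factor `c`: `(a,b] ↦ (ca, cb]`, `(a,∞) ↦ (ca, ∞)`. -/
def scaleBar (c : ℝ) (J : Bar) : Bar :=
  (c * J.1, if J.2 = ⊤ then ⊤ else (c : EReal) * J.2)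

/-- The barcode obtained from `B` by rescaling all endpoints of its bars by `c`
(bars that become empty are deleted). -/
def Barcode.scale (B : Barcode) (c : ℝ) : Barcode where
  mult I := if I.IsValid then ∑ᶠ (J : Bar) (_ : scaleBar c J = I), B.mult J else 0
  valid I h := by
    try dsimp only at h
    by_cases hv : I.IsValid
    · exact hv
    · rw [if_neg hv] at h; exact absurd rfl h

/-- The spectrum of a barcode: the set of finite endpoints of its bars. -/
def Barcode.spec (B : Barcode) : Set ℝ :=
  {x | ∃ I : Bar, B.mult I ≠ 0 ∧ (I.1 = x ∨ I.2 = (x : EReal))}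


/-! ### Auxiliary lemmas -/

theorem Barcode.ext' {B B' : Barcode} (h : ∀ I, B.mult I = B'.mult I) : B = B' := by
  cases B; cases B'; congr 1; exact funext h

theorem Barcode.mult_eq_zero_of_not_valid (B : Barcode) {I : Bar} (h : ¬ I.IsValid) :
    B.mult I = 0 := by
  by_contra h'; exact h (B.valid I h')

theorem scaleBar_bot (c a : ℝ) (hc : 0 < c) : scaleBar c (a, (⊥ : EReal)) = (c * a, ⊥) := by
  unfold scaleBar
  simp [EReal.mul_bot_of_pos (show (0:EReal) < (c:EReal) by exact_mod_cast hc)]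

theorem scaleBar_real (c a b : ℝ) : scaleBar c (a, (b : EReal)) = (c * a, ((c*b : ℝ) : EReal)) := by
  unfold scaleBar
  simp [EReal.coe_mul]

theorem scaleBar_top (c a : ℝ) : scaleBar c (a, (⊤ : EReal)) = (c * a, ⊤) := by
  unfold scaleBar; simp

theorem scaleBar_scaleBar {c d : ℝ} (hc : 0 < c) (hd : 0 < d) (J : Bar) :
    scaleBar c (scaleBar d J) = scaleBar (c*d) J := by
  obtain ⟨a, b⟩ := J
  induction b using EReal.rec with
  | bot => rw [scaleBar_bot _ _ hd, scaleBar_bot _ _ hc, scaleBar_bot _ _ (mul_pos hc hd), mul_assoc]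
  | coe b => rw [scaleBar_real, scaleBar_real, scaleBar_real, mul_assoc, mul_assoc]
  | top => rw [scaleBar_top, scaleBar_top, scaleBar_top, mul_assoc]

theorem scaleBar_one (J : Bar) : scaleBar 1 J = J := by
  obtain ⟨a, b⟩ := J
  induction b using EReal.rec with
  | bot => rw [scaleBar_bot _ _ one_pos, one_mul]
  | coe b => rw [scaleBar_real, one_mul, one_mul]
  | top => rw [scaleBar_top, one_mul]

theorem scaleBar_inv_scaleBar {c : ℝ} (hc : 0 < c) (J : Bar) :
    scaleBar c⁻¹ (scaleBar c J) = J := by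
  rw [scaleBar_scaleBar (inv_pos.mpr hc) hc, inv_mul_cancel₀ hc.ne', scaleBar_one]

theorem scaleBar_scaleBar_inv {c : ℝ} (hc : 0 < c) (J : Bar) :
    scaleBar c (scaleBar c⁻¹ J) = J := by
  rw [scaleBar_scaleBar hc (inv_pos.mpr hc), mul_inv_cancel₀ hc.ne', scaleBar_one]

theorem scaleBar_valid {c : ℝ} (hc : 0 < c) {J : Bar} :
    (scaleBar c J).IsValid ↔ J.IsValid := by
  obtain ⟨a, b⟩ := J
  induction b using EReal.rec with
  | bot =>
      rw [scaleBar_bot _ _ hc]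
      simp [Bar.IsValid]
  | coe b =>
      rw [scaleBar_real]
      simp only [Bar.IsValid]
      rw [EReal.coe_lt_coe_iff, EReal.coe_lt_coe_iff]
      exact mul_lt_mul_iff_right₀ hc
  | top =>
      rw [scaleBar_top]
      simp only [Bar.IsValid]
      constructor
      · intro _; exact EReal.coe_lt_top a
      · intro _; exact EReal.coe_lt_top _

theorem Barcode.scale_mult (B : Barcode) {c : ℝ} (hc : 0 < c) (I : Bar) :
    (B.scale c).mult I = if I.IsValid then B.mult (scaleBar c⁻¹ I) else 0 := by
  show (if I.IsValid then ∑ᶠ (J : Bar) (_ : scaleBar c J = I), B.mult J else 0) = _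
  by_cases hv : I.IsValid
  · rw [if_pos hv, if_pos hv]
    have h1 : ∀ J : Bar, (∑ᶠ _ : scaleBar c J = I, B.mult J)
        = if scaleBar c J = I then B.mult J else 0 := fun J => finsum_eq_if
    rw [finsum_congr h1, finsum_eq_single _ (scaleBar c⁻¹ I) ?_, if_pos (scaleBar_scaleBar_inv hc I)]
    intro J hJ
    rw [if_neg]
    intro hJI
    exact hJ (by rw [← hJI, scaleBar_inv_scaleBar hc])
  · rw [if_neg hv, if_neg hv]

theorem Barcode.scale_one (B : Barcode) : B.scale 1 = B := by
  apply Barcode.ext'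
  intro I
  rw [B.scale_mult one_pos, inv_one]
  by_cases hv : I.IsValid
  · rw [if_pos hv, scaleBar_one]
  · rw [if_neg hv, B.mult_eq_zero_of_not_valid hv]

theorem Barcode.scale_scale (B : Barcode) {c d : ℝ} (hc : 0 < c) (hd : 0 < d) :
    (B.scale c).scale d = B.scale (d * c) := by
  apply Barcode.ext'
  intro I
  rw [(B.scale c).scale_mult hd, B.scale_mult (mul_pos hd hc)]
  by_cases hv : I.IsValid
  · rw [if_pos hv, if_pos hv, B.scale_mult hc,
      if_pos ((scaleBar_valid (inv_pos.mpr hd)).mpr hv),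
      scaleBar_scaleBar (inv_pos.mpr hc) (inv_pos.mpr hd), ← mul_inv, mul_comm c d]
  · rw [if_neg hv, if_neg hv]

theorem Barcode.scale_injective {B B' : Barcode} {c : ℝ} (hc : 0 < c)
    (h : B.scale c = B'.scale c) : B = B' := by
  apply Barcode.ext'
  intro J
  by_cases hv : J.IsValid
  · have := congrArg (fun X => Barcode.mult X (scaleBar c J)) h
    rw [B.scale_mult hc, B'.scale_mult hc,
      if_pos ((scaleBar_valid hc).mpr hv), if_pos ((scaleBar_valid hc).mpr hv),
      scaleBar_inv_scaleBar hc] at this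
    exact this
  · rw [B.mult_eq_zero_of_not_valid hv, B'.mult_eq_zero_of_not_valid hv]

theorem Barcode.mem_spec_fst {B : Barcode} {I : Bar} (h : B.mult I ≠ 0) : I.1 ∈ B.spec :=
  ⟨I, h, Or.inl rfl⟩

theorem Barcode.snd_cases {B : Barcode} {I : Bar} (h : B.mult I ≠ 0) :
    I.2 = ⊤ ∨ ∃ y : ℝ, I.2 = (y : EReal) ∧ y ∈ B.spec := by
  have hv := B.valid I h
  obtain ⟨a, b⟩ := I
  induction b using EReal.rec with
  | bot => exact absurd hv (by simp [Bar.IsValid])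
  | coe y => exact Or.inr ⟨y, rfl, ⟨(a, (y:EReal)), h, Or.inr rfl⟩⟩
  | top => exact Or.inl rfl

theorem Barcode.spec_finite {B : Barcode} (h : B.IsFinite) : B.spec.Finite := by
  apply Set.Finite.subset
    (h.biUnion (fun I _ => (Set.finite_singleton I.1).union (Set.finite_singleton I.2.toReal)))
  rintro x ⟨I, hI, hx⟩
  refine Set.mem_biUnion hI ?_
  rcases hx with h1 | h2
  · exact Or.inl h1.symm
  · right
    simp only [Set.mem_singleton_iff, h2, EReal.toReal_coe]


theorem sep_eq {S : Set ℝ} {g M c c' δ : ℝ} (hc' : 0 < c')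
    (hgap : ∀ x ∈ S, ∀ y ∈ S, x ≠ y → g ≤ |x - y|) (hMb : ∀ x ∈ S, |x| ≤ M)
    (hsep : |c - c'| * M + δ < c' * g) {x x' : ℝ} (hx : x ∈ S) (hx' : x' ∈ S)
    (habs : |c * x - c' * x'| ≤ δ) : x = x' := by
  by_contra hne
  have hg1 : g ≤ |x - x'| := hgap _ hx _ hx' hne
  have e2 : |x| ≤ M := hMb x hx
  have k1 : c' * |x - x'| = |c' * x - c' * x'| := by
    rw [← mul_sub, abs_mul, abs_of_pos hc']
  have k2 : |c' * x - c' * x'| ≤ |c' * x - c * x| + |c * x - c' * x'| := abs_sub_le _ _ _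
  have k3 : |c' * x - c * x| ≤ |c - c'| * M := by
    rw [← sub_mul, abs_mul, abs_sub_comm c' c]
    exact mul_le_mul_of_nonneg_left e2 (abs_nonneg _)
  have k5 : c' * g ≤ c' * |x - x'| := mul_le_mul_of_nonneg_left hg1 hc'.le
  linarith

theorem len_not_le {S : Set ℝ} {g δ c : ℝ}
    (hgap : ∀ x ∈ S, ∀ y ∈ S, x ≠ y → g ≤ |x - y|)
    (hc : 0 < c) (hδ : 2*δ < c*g) {B : Barcode}
    (hBs : B.spec = (fun x => c * x) '' S) {I : Bar} (hI : B.mult I ≠ 0) :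
    ¬ (I.len ≤ ((2*δ : ℝ) : EReal)) := by
  intro hle
  obtain ⟨x, hxS, hx1⟩ : ∃ x ∈ S, c * x = I.1 := by
    have := Barcode.mem_spec_fst hI; rw [hBs] at this; exact this
  rcases Barcode.snd_cases hI with h2 | ⟨y, hy2, hyS⟩
  · rw [Bar.len, h2, EReal.top_sub_coe] at hle
    exact (EReal.coe_lt_top (2*δ)).not_ge hle
  · rw [hBs] at hyS
    obtain ⟨y', hy'S, hy'⟩ := hyS
    simp only at hy'
    rw [Bar.len, hy2, ← EReal.coe_sub, EReal.coe_le_coe_iff] at hle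
    have hv := B.valid I hI
    rw [Bar.IsValid, hy2, EReal.coe_lt_coe_iff] at hv
    have hxy : x < y' := by
      rw [← hx1] at hv; rw [← hy'] at hv
      exact lt_of_mul_lt_mul_left hv hc.le
    have hgle : g ≤ |x - y'| := hgap _ hxS _ hy'S hxy.ne
    rw [abs_of_neg (by linarith), neg_sub] at hgle
    have : c * g ≤ c * (y' - x) := mul_le_mul_of_nonneg_left hgle hc.le
    have hyx : c * (y' - x) = y - I.1 := by rw [← hx1, ← hy']; ring
    linarith

theorem local_rigid (S : Set ℝ) (g M : ℝ)
    (hgap : ∀ x ∈ S, ∀ y ∈ S, x ≠ y → g ≤ |x - y|) (hMb : ∀ x ∈ S, |x| ≤ M)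
    (B B' : Barcode) (c c' : ℝ) (hc : 0 < c) (hc' : 0 < c')
    (hBs : B.spec = (fun x => c * x) '' S) (hB's : B'.spec = (fun x => c' * x) '' S)
    (δ : ℝ) (m : Bar → Bar → ℕ) (hm : Barcode.IsMatching B B' δ m)
    (hδc : 2*δ < c*g) (hδc' : 2*δ < c'*g) (hsep : |c - c'| * M + δ < c' * g) :
    B' = B.scale (c'/c) := by
  obtain ⟨hfin1, hfin2, hle1, hle2, hdel1, hdel2, hclose⟩ := hm
  have hr : 0 < c'/c := div_pos hc' hc
  have hfull1 : ∀ I, B.mult I ≠ 0 → ∑ᶠ J, m I J = B.mult I := fun I h =>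
    le_antisymm (hle1 I) (le_of_not_gt fun hlt => len_not_le hgap hc hδc hBs h (hdel1 I hlt))
  have hfull2 : ∀ J, B'.mult J ≠ 0 → ∑ᶠ I, m I J = B'.mult J := fun J h =>
    le_antisymm (hle2 J) (le_of_not_gt fun hlt => len_not_le hgap hc' hδc' hB's h (hdel2 J hlt))
  have hcorr : ∀ I J, m I J ≠ 0 → B.mult I ≠ 0 ∧ B'.mult J ≠ 0 ∧ J = scaleBar (c'/c) I := by
    intro I J hIJ
    have hBm : B.mult I ≠ 0 := by
      have h1 : m I J ≤ ∑ᶠ J', m I J' := single_le_finsum J (hfin1 I) (fun _ => Nat.zero_le _)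
      have h2 := hle1 I
      omega
    have hB'm : B'.mult J ≠ 0 := by
      have h1 : m I J ≤ ∑ᶠ I', m I' J :=
        single_le_finsum (f := fun I' => m I' J) I (hfin2 J) (fun _ => Nat.zero_le _)
      have h2 := hle2 J
      omega
    obtain ⟨⟨hs1, hs2⟩, hs3, hs4⟩ := hclose I J hIJ
    obtain ⟨x, hxS, hx1⟩ : ∃ x ∈ S, c * x = I.1 := by
      have := Barcode.mem_spec_fst hBm; rw [hBs] at this; exact this
    obtain ⟨x', hx'S, hx'1⟩ : ∃ x' ∈ S, c' * x' = J.1 := by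
      have := Barcode.mem_spec_fst hB'm; rw [hB's] at this; exact this
    have e1 : |c * x - c' * x'| ≤ δ := by
      rw [hx1, hx'1]
      exact abs_sub_le_iff.mpr ⟨by linarith, by linarith⟩
    have hxx : x = x' := sep_eq hc' hgap hMb hsep hxS hx'S e1
    refine ⟨hBm, hB'm, ?_⟩
    have hfst : J.1 = c'/c * I.1 := by
      rw [← hx1, ← hx'1, ← hxx]; field_simp
    rcases Barcode.snd_cases hBm with hItop | ⟨y, hy, hyS⟩
    · -- I.2 = ⊤ forces J.2 = ⊤
      have hJtop : J.2 = ⊤ := by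
        rcases Barcode.snd_cases hB'm with h | ⟨y', hy', _⟩
        · exact h
        · exfalso
          rw [hItop, hy', ← EReal.coe_add] at hs2
          exact (EReal.coe_lt_top (y' + δ)).not_ge hs2
      have : scaleBar (c'/c) I = (c'/c * I.1, ⊤) := by
        unfold scaleBar; rw [if_pos hItop]
      rw [this, Prod.ext_iff]
      exact ⟨hfst, hJtop⟩
    · -- I.2 = y real
      rcases Barcode.snd_cases hB'm with hJtop | ⟨y', hy', hy'S⟩
      · exfalso
        rw [hJtop, hy, ← EReal.coe_add] at hs4
        exact (EReal.coe_lt_top (y + δ)).not_ge hs4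
      · rw [hBs] at hyS; rw [hB's] at hy'S
        obtain ⟨v, hvS, hv⟩ := hyS
        obtain ⟨v', hv'S, hv'⟩ := hy'S
        simp only at hv hv'
        rw [hy, hy', ← EReal.coe_add, EReal.coe_le_coe_iff] at hs2 hs4
        have e2 : |c * v - c' * v'| ≤ δ := by
          rw [hv, hv']
          exact abs_sub_le_iff.mpr ⟨by linarith, by linarith⟩
        have hvv : v = v' := sep_eq hc' hgap hMb hsep hvS hv'S e2
        have : scaleBar (c'/c) I = (c'/c * I.1, ((c'/c * y : ℝ) : EReal)) := by
          unfold scaleBar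
          rw [if_neg (by rw [hy]; exact EReal.coe_ne_top y), hy, ← EReal.coe_mul]
        rw [this, Prod.ext_iff, hy']
        refine ⟨hfst, ?_⟩
        rw [EReal.coe_eq_coe_iff, ← hv, ← hv', ← hvv]
        field_simp
  symm
  apply Barcode.ext'
  intro J
  rw [B.scale_mult hr]
  by_cases hJv : J.IsValid
  · rw [if_pos hJv]
    set I₀ := scaleBar (c'/c)⁻¹ J with hI₀def
    have hI₀J : scaleBar (c'/c) I₀ = J := scaleBar_scaleBar_inv hr J
    show B.mult I₀ = B'.mult J
    by_cases hJm : B'.mult J = 0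
    · rw [hJm]
      by_contra hI₀m'
      have h1 : ∑ᶠ J', m I₀ J' = B.mult I₀ := hfull1 _ hI₀m'
      have : ∃ J', m I₀ J' ≠ 0 := by
        by_contra hall
        push_neg at hall
        rw [finsum_eq_zero_of_forall_eq_zero hall] at h1
        exact hI₀m' h1.symm
      obtain ⟨J', hJ'⟩ := this
      have := (hcorr I₀ J' hJ').2.2
      rw [hI₀J] at this
      rw [this] at hJ'
      have := (hcorr I₀ J hJ').2.1
      exact this hJm
    · have h2 : ∑ᶠ I, m I J = B'.mult J := hfull2 J hJm
      have hsupp : ∀ I, I ≠ I₀ → m I J = 0 := by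
        intro I hne
        by_contra h
        apply hne
        have hJI := (hcorr I J h).2.2
        rw [hI₀def, hJI, scaleBar_inv_scaleBar hr]
      rw [finsum_eq_single _ I₀ hsupp] at h2
      have hI₀m : B.mult I₀ ≠ 0 := (hcorr I₀ J (by rw [h2]; exact hJm)).1
      have h1 : ∑ᶠ J', m I₀ J' = B.mult I₀ := hfull1 _ hI₀m
      have hsupp' : ∀ J', J' ≠ J → m I₀ J' = 0 := by
        intro J' hne
        by_contra h
        exact hne (by rw [(hcorr I₀ J' h).2.2, hI₀J])
      rw [finsum_eq_single _ J hsupp'] at h1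
      rw [← h1, ← h2]
  · rw [if_neg hJv, B'.mult_eq_zero_of_not_valid hJv]


theorem base_case (B : Barcode) (hfin : B.IsFinite) (c : ℝ) (hc : 0 < c)
    (hs : B.spec = (fun x => c * x) '' B.spec) : B = B.scale c := by
  by_cases hc1 : c = 1
  · rw [hc1, B.scale_one]
  -- all spectrum points are 0
  have hsub : ∀ x ∈ B.spec, x = 0 := by
    intro x hx
    by_contra hx0
    have hiter : ∀ n : ℕ, c ^ n * x ∈ B.spec := by
      intro n
      induction n with
      | zero => simpa using hx
      | succ n ih =>
          have : c * (c ^ n * x) ∈ B.spec := by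
            rw [hs]; exact ⟨c ^ n * x, ih, rfl⟩
          rw [pow_succ]
          convert this using 1
          ring
    have hinj : Function.Injective (fun n : ℕ => c ^ n * x) := by
      intro a b h
      dsimp at h
      have h2 : c ^ a = c ^ b := mul_right_cancel₀ hx0 h
      have h3 : (a : ℝ) * Real.log c = (b : ℝ) * Real.log c := by
        rw [← Real.log_pow, ← Real.log_pow, h2]
      have hlog : Real.log c ≠ 0 := by
        intro h0
        rcases Real.log_eq_zero.mp h0 with h | h | h <;> [exact hc.ne' h; exact hc1 h; nlinarith]
      have : (a : ℝ) = b := mul_right_cancel₀ hlog h3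
      exact_mod_cast this
    exact (Set.infinite_of_injective_forall_mem hinj hiter) (Barcode.spec_finite hfin)
  have hbar : ∀ I : Bar, B.mult I ≠ 0 → I = ((0:ℝ), (⊤:EReal)) := by
    intro I h
    have h1 : I.1 = 0 := hsub _ (Barcode.mem_spec_fst h)
    rcases Barcode.snd_cases h with htop | ⟨y, hy, hyS⟩
    · exact Prod.ext_iff.mpr ⟨h1, htop⟩
    · exfalso
      have hy0 : y = 0 := hsub _ hyS
      have hv := B.valid I h
      rw [Bar.IsValid, hy, h1, hy0] at hv
      exact lt_irrefl _ hv
  apply Barcode.ext'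
  intro I
  rw [B.scale_mult hc]
  by_cases hv : I.IsValid
  · rw [if_pos hv]
    by_cases hI : I = ((0:ℝ), (⊤:EReal))
    · rw [hI]
      have : scaleBar c⁻¹ ((0:ℝ), (⊤:EReal)) = ((0:ℝ), (⊤:EReal)) := by
        rw [scaleBar_top, mul_zero]
      rw [this]
    · have e1 : B.mult I = 0 := by
        by_contra h; exact hI (hbar I h)
      have e2 : B.mult (scaleBar c⁻¹ I) = 0 := by
        by_contra h
        apply hI
        have := hbar _ h
        rw [← scaleBar_scaleBar_inv hc I, this, scaleBar_top, mul_zero]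
      rw [e1, e2]
  · rw [if_neg hv, B.mult_eq_zero_of_not_valid hv]

/-- If `(B_t)` is a continuous path of finite barcodes whose spectra satisfy
`Spec(B_t) = f(t)·Spec(B_0)` for a continuous positive function `f`, then `B_t` is the
dilation of `B_0` by the factor `f(t)`. -/
theorem dilation_of_spec_scaling (Bt : ℝ → Barcode)
    (hfin : ∀ t ∈ Set.Icc (0 : ℝ) 1, (Bt t).IsFinite)
    (hcont : ∀ t ∈ Set.Icc (0 : ℝ) 1, ∀ ε : ℝ, 0 < ε → ∃ η : ℝ, 0 < η ∧
      ∀ s ∈ Set.Icc (0 : ℝ) 1, |s - t| < η →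
        Barcode.bottleneck (Bt s) (Bt t) < (ε : EReal))
    (f : ℝ → ℝ) (hfcont : ContinuousOn f (Set.Icc (0 : ℝ) 1))
    (hfpos : ∀ t ∈ Set.Icc (0 : ℝ) 1, 0 < f t)
    (hspec : ∀ t ∈ Set.Icc (0 : ℝ) 1,
      (Bt t).spec = (fun x => f t * x) '' (Bt 0).spec) :
    ∀ t ∈ Set.Icc (0 : ℝ) 1, Bt t = (Bt 0).scale (f t) := by
  have h0 : (0:ℝ) ∈ Set.Icc (0:ℝ) 1 := by norm_num
  set S := (Bt 0).spec with hSdef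
  have hSfin : S.Finite := Barcode.spec_finite (hfin 0 h0)
  set T : Finset ℝ := hSfin.toFinset with hT
  have hTm : ∀ x, x ∈ T ↔ x ∈ S := fun x => Set.Finite.mem_toFinset _
  set D : Finset ℝ := ((T ×ˢ T).filter fun p => p.1 ≠ p.2).image fun p => |p.1 - p.2| with hD
  set g : ℝ := if h : D.Nonempty then D.min' h else 1 with hgdef
  have hg : 0 < g := by
    rw [hgdef]
    split_ifs with h
    · have hmm := D.min'_mem h
      obtain ⟨p, hpf, hpe⟩ := Finset.mem_image.mp hmm
      have hne : p.1 ≠ p.2 := (Finset.mem_filter.mp hpf).2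
      rw [← hpe]
      exact abs_pos.mpr (sub_ne_zero.mpr hne)
    · exact one_pos
  have hgap : ∀ x ∈ S, ∀ y ∈ S, x ≠ y → g ≤ |x - y| := by
    intro x hx y hy hne
    have hmem : |x - y| ∈ D := by
      rw [hD]
      exact Finset.mem_image.mpr ⟨(x, y), Finset.mem_filter.mpr
        ⟨Finset.mem_product.mpr ⟨(hTm x).mpr hx, (hTm y).mpr hy⟩, hne⟩, rfl⟩
    rw [hgdef, dif_pos ⟨_, hmem⟩]
    exact Finset.min'_le _ _ hmem
  set M : ℝ := if h : (T.image fun x => |x|).Nonempty then (T.image fun x => |x|).max' h else 0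
    with hMdef
  have hMb : ∀ x ∈ S, |x| ≤ M := by
    intro x hx
    have hmem : |x| ∈ T.image (fun x => |x|) := Finset.mem_image.mpr ⟨x, (hTm x).mpr hx, rfl⟩
    rw [hMdef, dif_pos ⟨_, hmem⟩]
    exact Finset.le_max' _ _ hmem
  have hM0 : 0 ≤ M := by
    rw [hMdef]
    split_ifs with h
    · obtain ⟨y, hy⟩ := h
      refine le_trans ?_ (Finset.le_max' _ y hy)
      obtain ⟨x, _, rfl⟩ := Finset.mem_image.mp hy
      exact abs_nonneg x
    · exact le_refl 0
  have key : ∀ t ∈ Set.Icc (0:ℝ) 1, ∃ η : ℝ, 0 < η ∧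
      ∀ s ∈ Set.Icc (0:ℝ) 1, |s - t| < η → Bt s = (Bt t).scale (f s / f t) := by
    intro t ht
    have hcpos := hfpos t ht
    set c := f t with hcdef
    set ε := c * g / 8 with hε
    have hεpos : 0 < ε := by positivity
    obtain ⟨η₁, hη₁, hball⟩ := hcont t ht ε hεpos
    have hM1 : 0 < M + 1 := by linarith
    set εf := min (c/2) (c*g/(4*(M+1))) with hεf
    have hεfpos : 0 < εf := lt_min (by positivity) (by positivity)
    have hfc : ContinuousWithinAt f (Set.Icc 0 1) t := hfcont t ht
    obtain ⟨η₂, hη₂, hf2⟩ := Metric.continuousWithinAt_iff.mp hfc εf hεfpos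
    refine ⟨min η₁ η₂, lt_min hη₁ hη₂, ?_⟩
    intro s hsI hst
    have hb := hball s hsI (lt_of_lt_of_le hst (min_le_left _ _))
    obtain ⟨xe, ⟨δ, hδ0, rfl, hmatch⟩, hxε⟩ := sInf_lt_iff.mp hb
    have hδε : δ < ε := EReal.coe_lt_coe_iff.mp hxε
    have hfs : |f s - c| < εf := by
      have h3 := hf2 hsI (show dist s t < η₂ by
        rw [Real.dist_eq]; exact lt_of_lt_of_le hst (min_le_right _ _))
      rwa [Real.dist_eq] at h3
    have hfspos := hfpos s hsI
    obtain ⟨m, hm⟩ := hmatch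
    have hcg : 0 < c * g := mul_pos hcpos hg
    have hfs2 : c / 2 < f s := by
      have h1 : |f s - c| < c/2 := lt_of_lt_of_le hfs (min_le_left _ _)
      have h2 := abs_lt.mp h1
      linarith [h2.1]
    have hsep : |f s - c| * M + δ < c * g := by
      have h1 : |f s - c| ≤ c*g/(4*(M+1)) := le_of_lt (lt_of_lt_of_le hfs (min_le_right _ _))
      have h2 : |f s - c| * M ≤ c*g/(4*(M+1)) * M := mul_le_mul_of_nonneg_right h1 hM0
      have h3 : c*g/(4*(M+1)) * M ≤ c*g/4 := by
        rw [div_mul_eq_mul_div, div_le_div_iff₀ (by positivity) (by norm_num)]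
        nlinarith
      have h4 : δ < c*g/8 := hδε
      linarith
    have hδ1 : 2*δ < f s * g := by
      have k := mul_lt_mul_of_pos_right hfs2 hg
      have h4 : δ < c*g/8 := hδε
      nlinarith
    have hδ2 : 2*δ < c * g := by
      have h4 : δ < c*g/8 := hδε
      linarith
    have heq := local_rigid S g M hgap hMb (Bt s) (Bt t) (f s) c hfspos hcpos
      (hspec s hsI) (hspec t ht) δ m hm hδ1 hδ2 hsep
    have h2 := congrArg (fun X => Barcode.scale X (f s / c)) heq
    rw [Barcode.scale_scale _ (div_pos hcpos hfspos) (div_pos hfspos hcpos)] at h2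
    rw [show (f s / c) * (c / f s) = 1 by field_simp, Barcode.scale_one] at h2
    exact h2.symm
  choose η hηpos hloc using key
  have base : Bt 0 = (Bt 0).scale (f 0) :=
    base_case _ (hfin 0 h0) _ (hfpos 0 h0) (hspec 0 h0)
  intro t ht
  by_contra hP
  set U : Set ℝ := ⋃ (u : ℝ) (h : u ∈ Set.Icc (0:ℝ) 1 ∧ Bt u = (Bt 0).scale (f u)),
    Metric.ball u (η u h.1) with hU
  set V : Set ℝ := ⋃ (u : ℝ) (h : u ∈ Set.Icc (0:ℝ) 1 ∧ ¬ Bt u = (Bt 0).scale (f u)),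
    Metric.ball u (η u h.1) with hV
  have hUopen : IsOpen U := isOpen_iUnion fun u => isOpen_iUnion fun h => Metric.isOpen_ball
  have hVopen : IsOpen V := isOpen_iUnion fun u => isOpen_iUnion fun h => Metric.isOpen_ball
  have hcover : Set.Icc (0:ℝ) 1 ⊆ U ∪ V := by
    intro u hu
    by_cases hPu : Bt u = (Bt 0).scale (f u)
    · exact Or.inl (Set.mem_iUnion.mpr ⟨u, Set.mem_iUnion.mpr
        ⟨⟨hu, hPu⟩, Metric.mem_ball_self (hηpos u hu)⟩⟩)
    · exact Or.inr (Set.mem_iUnion.mpr ⟨u, Set.mem_iUnion.mpr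
        ⟨⟨hu, hPu⟩, Metric.mem_ball_self (hηpos u hu)⟩⟩)
  have hUne : (Set.Icc (0:ℝ) 1 ∩ U).Nonempty :=
    ⟨0, h0, Set.mem_iUnion.mpr ⟨0, Set.mem_iUnion.mpr
      ⟨⟨h0, base⟩, Metric.mem_ball_self (hηpos 0 h0)⟩⟩⟩
  have hVne : (Set.Icc (0:ℝ) 1 ∩ V).Nonempty :=
    ⟨t, ht, Set.mem_iUnion.mpr ⟨t, Set.mem_iUnion.mpr
      ⟨⟨ht, hP⟩, Metric.mem_ball_self (hηpos t ht)⟩⟩⟩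
  obtain ⟨s, hsI, hsU, hsV⟩ := isPreconnected_Icc U V hUopen hVopen hcover hUne hVne
  obtain ⟨u₁, hu₁⟩ := Set.mem_iUnion.mp hsU
  obtain ⟨h₁, hball₁⟩ := Set.mem_iUnion.mp hu₁
  obtain ⟨u₂, hu₂⟩ := Set.mem_iUnion.mp hsV
  obtain ⟨h₂, hball₂⟩ := Set.mem_iUnion.mp hu₂
  have hpos1 := hfpos u₁ h₁.1
  have hpos2 := hfpos u₂ h₂.1
  have hposs := hfpos s hsI
  have e1 : Bt s = (Bt u₁).scale (f s / f u₁) := by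
    apply hloc u₁ h₁.1 s hsI
    have h3 := Metric.mem_ball.mp hball₁
    rwa [Real.dist_eq] at h3
  have e2 : Bt s = (Bt u₂).scale (f s / f u₂) := by
    apply hloc u₂ h₂.1 s hsI
    have h3 := Metric.mem_ball.mp hball₂
    rwa [Real.dist_eq] at h3
  have e1' : Bt s = (Bt 0).scale (f s) := by
    rw [e1, h₁.2, Barcode.scale_scale _ hpos1 (div_pos hposs hpos1),
      div_mul_cancel₀ _ hpos1.ne']
  apply h₂.2
  have e3 : ((Bt 0).scale (f u₂)).scale (f s / f u₂) = (Bt 0).scale (f s) := by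
    rw [Barcode.scale_scale _ hpos2 (div_pos hposs hpos2), div_mul_cancel₀ _ hpos2.ne']
  apply Barcode.scale_injective (div_pos hposs hpos2)
  rw [← e2, e3, ← e1']
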